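/- arXiv:2009.10470 — 5 statements merged into one kernel-verified Lean document; each statement's English description precedes it below -/
import Mathlib

section
/- There is no surjective group homomorphism (continuous or not) from a compact Hausdorff topological group onto the integers ℤ. -/
lemma int_eq_zero_of_forall_pow_dvd (q m : ℤ) (hq : 2 ≤ q) (h : ∀ n : ℕ, q^n ∣ m) : m = 0 := by
  by_contra hm
  have h1 : q^(m.natAbs) ∣ |m| := (dvd_abs _ _).mpr (h m.natAbs)
  have h2 : q^(m.natAbs) ≤ |m| := Int.le_of_dvd (abs_pos.mpr hm) h1
  have h3 : ((m.natAbs : ℤ)) < 2^(m.natAbs) := by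
    exact_mod_cast Nat.lt_pow_self (n := m.natAbs) (by norm_num : 1 < 2)
  have h4 : (2:ℤ)^(m.natAbs) ≤ q^(m.natAbs) := pow_le_pow_left₀ (by norm_num) hq _
  rw [Int.abs_eq_natAbs] at h2
  omega

theorem no_surjective_hom_compact_to_int (G : Type*) [Group G] [TopologicalSpace G]
    [IsTopologicalGroup G] [CompactSpace G] [T2Space G] (f : G →* Multiplicative ℤ) :
    ¬ Function.Surjective f := by
  intro hsurj
  obtain ⟨a, ha⟩ := hsurj (Multiplicative.ofAdd 1)
  -- S n : set of 3^n-th powers; T n : set of 2^n-th powers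
  set S : ℕ → Set G := fun n => Set.range (fun x : G => x ^ ((3:ℤ)^n)) with hS
  set T : ℕ → Set G := fun n => Set.range (fun x : G => x ^ ((2:ℤ)^n)) with hT
  have hScl : ∀ n, IsClosed (S n) := fun n =>
    (isCompact_range (continuous_zpow _)).isClosed
  have hTcl : ∀ n, IsClosed (T n) := fun n =>
    (isCompact_range (continuous_zpow _)).isClosed
  set C : ℕ → Set G := fun n => S n ∩ ((fun s => a * s⁻¹) ⁻¹' T n) with hC
  have hCcl : ∀ n, IsClosed (C n) := fun n =>
    (hScl n).inter ((hTcl n).preimage (by continuity))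
  -- nested
  have hSnest : ∀ n, S (n+1) ⊆ S n := by
    rintro n _ ⟨x, rfl⟩
    refine ⟨x ^ (3:ℤ), ?_⟩
    show (x ^ (3:ℤ)) ^ ((3:ℤ)^n) = x ^ ((3:ℤ)^(n+1))
    rw [← zpow_mul, ← pow_succ']
  have hTnest : ∀ n, T (n+1) ⊆ T n := by
    rintro n _ ⟨x, rfl⟩
    refine ⟨x ^ (2:ℤ), ?_⟩
    show (x ^ (2:ℤ)) ^ ((2:ℤ)^n) = x ^ ((2:ℤ)^(n+1))
    rw [← zpow_mul, ← pow_succ']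
  have hCnest : ∀ n, C (n+1) ⊆ C n := fun n y hy =>
    ⟨hSnest n hy.1, hTnest n hy.2⟩
  -- nonempty, by Bezout
  have hCne : ∀ n, (C n).Nonempty := by
    intro n
    have hcop : IsCoprime ((3:ℤ)^n) ((2:ℤ)^n) :=
      IsCoprime.pow (Int.isCoprime_iff_gcd_eq_one.mpr (by decide))
    obtain ⟨u, v, huv⟩ := hcop
    refine ⟨a ^ (u * (3:ℤ)^n), ⟨a ^ u, ?_⟩, ⟨a ^ v, ?_⟩⟩
    · show (a ^ u) ^ ((3:ℤ)^n) = a ^ (u * (3:ℤ)^n)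
      rw [← zpow_mul]
    · show (a ^ v) ^ ((2:ℤ)^n) = a * (a ^ (u * (3:ℤ)^n))⁻¹
      rw [← zpow_mul]
      have h1 : a * (a ^ (u * (3:ℤ)^n))⁻¹ = a ^ (1 - u * (3:ℤ)^n) := by
        rw [zpow_sub, zpow_one]
      rw [h1]
      congr 1
      linarith
  obtain ⟨s, hs⟩ := IsCompact.nonempty_iInter_of_sequence_nonempty_isCompact_isClosed C
    hCnest hCne ((hCcl 0).isCompact) hCcl
  simp only [Set.mem_iInter] at hs
  -- f s is divisible by all powers of 3, hence trivial
  have hfs : (Multiplicative.toAdd (f s)) = 0 := by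
    apply int_eq_zero_of_forall_pow_dvd 3 _ (by norm_num)
    intro n
    obtain ⟨x, hx⟩ := (hs n).1
    have hx' : x ^ ((3:ℤ)^n) = s := hx
    exact ⟨Multiplicative.toAdd (f x), by rw [← hx', map_zpow, toAdd_zpow, smul_eq_mul]⟩
  -- f (a * s⁻¹) is divisible by all powers of 2, hence trivial
  have hfas : (Multiplicative.toAdd (f (a * s⁻¹))) = 0 := by
    apply int_eq_zero_of_forall_pow_dvd 2 _ (by norm_num)
    intro n
    have h2 : a * s⁻¹ ∈ T n := (hs n).2
    obtain ⟨x, hx⟩ := h2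
    have hx' : x ^ ((2:ℤ)^n) = a * s⁻¹ := hx
    exact ⟨Multiplicative.toAdd (f x), by rw [← hx', map_zpow, toAdd_zpow, smul_eq_mul]⟩
  have hfa : Multiplicative.toAdd (f a) = 0 := by
    have h1 : f a = f (a * s⁻¹) * f s := by rw [← map_mul, inv_mul_cancel_right]
    rw [h1, toAdd_mul, hfs, hfas, add_zero]
  rw [ha] at hfa
  simp at hfa
end

section
/- Every group homomorphism (not assumed continuous) from a compact Hausdorff topological group to the integers ℤ, where ℤ carries the discrete topology, is continuous. -/
private lemma int_eq_zero_of_prime_pow_dvd {p : ℕ} (hp : p.Prime) {m : ℤ}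
    (h : ∀ k : ℕ, (p : ℤ) ^ k ∣ m) : m = 0 := by
  by_contra hm
  have h1 : (p : ℤ) ^ m.natAbs ∣ m := h m.natAbs
  have h2 : (p : ℤ) ^ m.natAbs ≤ |m| :=
    Int.le_of_dvd (abs_pos.mpr hm) ((dvd_abs _ _).mpr h1)
  have h3 : m.natAbs < p ^ m.natAbs := Nat.lt_pow_self hp.one_lt
  have h4 : |m| = (m.natAbs : ℤ) := (Int.abs_eq_natAbs m)
  have h5 : ((p : ℤ)) ^ m.natAbs = ((p ^ m.natAbs : ℕ) : ℤ) := by push_cast; ring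
  rw [h5, h4] at h2
  have h6 : p ^ m.natAbs ≤ m.natAbs := by exact_mod_cast h2
  omega

theorem hom_compact_to_int_continuous (G : Type*) [Group G] [TopologicalSpace G]
    [IsTopologicalGroup G] [CompactSpace G] [T2Space G] (f : G →* Multiplicative ℤ) :
    Continuous f := by
  have key : ∀ g : G, Multiplicative.toAdd (f g) = 0 := by
    intro g
    -- every prime divides `toAdd (f g)`
    have hdvd : ∀ q : ℕ, q.Prime → (q : ℤ) ∣ Multiplicative.toAdd (f g) := by
      intro q hq
      obtain ⟨p, hpq, hp⟩ := Nat.exists_infinite_primes (q + 1)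
      have hpq' : p ≠ q := by omega
      -- the sets
      set R : ℕ → Set G := fun k => Set.range (fun z : G => z ^ (p ^ k)) with hR
      set C : ℕ → Set G := fun k => (fun y : G => g * (y ^ q)⁻¹) ⁻¹' R k with hC
      have hcont : Continuous fun y : G => g * (y ^ q)⁻¹ :=
        continuous_const.mul ((continuous_pow q).inv)
      have hRcompact : ∀ k, IsCompact (R k) := by
        intro k
        have := isCompact_univ.image (continuous_pow (p ^ k) (M := G))
        simpa [Set.image_univ] using this
      have hRclosed : ∀ k, IsClosed (R k) := fun k => (hRcompact k).isClosed
      have hCclosed : ∀ k, IsClosed (C k) := fun k => (hRclosed k).preimage hcont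
      have hCcompact : ∀ k, IsCompact (C k) := fun k => (hCclosed k).isCompact
      have hCanti : ∀ k, C (k + 1) ⊆ C k := by
        intro k y hy
        obtain ⟨z, hz⟩ := hy
        refine ⟨z ^ p, ?_⟩
        simp only at hz ⊢
        rw [← pow_mul, ← pow_succ']
        exact hz
      have hCne : ∀ k, (C k).Nonempty := by
        intro k
        have hcop : IsCoprime (q : ℤ) ((p : ℤ) ^ k) := by
          have h0 : Nat.Coprime q (p ^ k) :=
            (Nat.Coprime.pow_right k ((Nat.coprime_primes hq hp).mpr hpq'.symm))
          have h1 : IsCoprime (q : ℤ) ((p ^ k : ℕ) : ℤ) := Nat.isCoprime_iff_coprime.mpr h0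
          push_cast at h1
          exact h1
        obtain ⟨a, b, hab⟩ := hcop
        refine ⟨g ^ a, ?_⟩
        show g * ((g ^ a) ^ q)⁻¹ ∈ R k
        refine ⟨g ^ b, ?_⟩
        show (g ^ b) ^ (p ^ k) = g * ((g ^ a) ^ q)⁻¹
        have h1 : ((g ^ a) ^ q) = g ^ (a * (q : ℤ)) := by
          rw [zpow_mul, zpow_natCast]
        have h2 : (g ^ b) ^ (p ^ k) = g ^ (b * ((p : ℤ) ^ k)) := by
          rw [zpow_mul]
          norm_cast
        have h3 : g * (g ^ (a * (q : ℤ)))⁻¹ = g ^ (1 - a * (q : ℤ)) := by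
          rw [zpow_sub, zpow_one]
        rw [h1, h2, h3]
        congr 1
        linarith
      obtain ⟨y, hy⟩ := IsCompact.nonempty_iInter_of_sequence_nonempty_isCompact_isClosed
        C hCanti hCne (hCcompact 0) hCclosed
      -- f kills the intersection point's defect
      have hm : Multiplicative.toAdd (f (g * (y ^ q)⁻¹)) = 0 := by
        apply int_eq_zero_of_prime_pow_dvd hp
        intro k
        have hyk : y ∈ C k := Set.mem_iInter.mp hy k
        obtain ⟨z, hz⟩ := hyk
        simp only at hz
        rw [← hz]
        refine ⟨Multiplicative.toAdd (f z), ?_⟩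
        rw [map_pow]
        simp [toAdd_pow]
      have expand : Multiplicative.toAdd (f g) =
          (q : ℤ) * Multiplicative.toAdd (f y) +
            Multiplicative.toAdd (f (g * (y ^ q)⁻¹)) := by
        rw [map_mul, map_inv, map_pow]
        simp [toAdd_pow, mul_comm]
      rw [expand, hm, add_zero]
      exact Dvd.intro _ rfl
    -- conclude
    by_contra hne
    obtain ⟨q, hq1, hq2⟩ := Nat.exists_infinite_primes ((Multiplicative.toAdd (f g)).natAbs + 1)
    have := Int.le_of_dvd (abs_pos.mpr hne) ((dvd_abs _ _).mpr (hdvd q hq2))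
    rw [Int.abs_eq_natAbs] at this
    omega
  have hconst : ⇑f = fun _ : G => (1 : Multiplicative ℤ) := by
    funext x
    exact Multiplicative.toAdd.injective (by simp [key x])
  rw [hconst]
  exact continuous_const
end

section
/- There exists a group homomorphism from the product group ∏_{n ∈ ℕ} ℤ/2ℤ (with the product topology, each factor discrete) onto ℤ/2ℤ (discrete) that is not continuous. -/
instance : TopologicalSpace (ZMod 2) := ⊥
instance : DiscreteTopology (ZMod 2) := ⟨rfl⟩

theorem exists_discontinuous_hom_prod_zmod2 :
    ∃ f : (ℕ → ZMod 2) →+ ZMod 2, Function.Surjective f ∧ ¬ Continuous f := by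
  -- left inverse of the inclusion of finitely supported functions
  obtain ⟨g, hg⟩ := (Finsupp.lcoeFun (α := ℕ) (M := ZMod 2)
    (R := ZMod 2)).exists_leftInverse_of_injective
    (LinearMap.ker_eq_bot.mpr (by exact DFunLike.coe_injective))
  -- functional summing the coordinates of a finsupp
  let s : (ℕ →₀ ZMod 2) →ₗ[ZMod 2] ZMod 2 := Finsupp.lsum (ZMod 2) (fun _ => LinearMap.id)
  let F : (ℕ → ZMod 2) →ₗ[ZMod 2] ZMod 2 := s ∘ₗ g
  have key : ∀ n : ℕ, F (Pi.single n 1) = 1 := by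
    intro n
    have h1 : (Finsupp.single n (1 : ZMod 2) : ℕ → ZMod 2) = Pi.single n 1 := by
      ext m; simp [Finsupp.single_apply, Pi.single_apply, eq_comm]
    have h2 : g (Pi.single n 1) = Finsupp.single n 1 := by
      rw [← h1]
      have := LinearMap.congr_fun hg (Finsupp.single n 1)
      simpa using this
    simp [F, h2, s]
  refine ⟨F.toAddMonoidHom, ?_, ?_⟩
  · intro y
    refine ⟨y • Pi.single 0 1, ?_⟩
    simp [map_smul, key 0]
  · intro hc
    have hopen : IsOpen (F ⁻¹' {0}) := hc.isOpen_preimage _ (isOpen_discrete _)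
    have h0 : (0 : ℕ → ZMod 2) ∈ F ⁻¹' {0} := by simp
    rw [isOpen_pi_iff] at hopen
    obtain ⟨I, u, hu, hsub⟩ := hopen 0 h0
    obtain ⟨n, hn⟩ := I.exists_notMem
    have hmem : (Pi.single n 1 : ℕ → ZMod 2) ∈ F ⁻¹' {0} := by
      apply hsub
      intro i hi
      have : (Pi.single n 1 : ℕ → ZMod 2) i = 0 := by
        rw [Pi.single_apply, if_neg]; rintro rfl; exact hn hi
      rw [this]
      exact (hu i hi).2
    have := key n
    simp only [Set.mem_preimage, Set.mem_singleton_iff] at hmem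
    rw [hmem] at this
    exact one_ne_zero this.symm
end

section
/- Every subgroup of (ℝⁿ, +) that is closed in the standard topology is isomorphic (as a topological group) to ℝˡ × ℤᵐ for some natural numbers l, m with l + m ≤ n. -/
open Submodule Module

variable {n : ℕ}

/-- The "vector part" of an additive subgroup: all `x` whose whole line lies in `H`. -/
def Vpart (H : AddSubgroup (Fin n → ℝ)) : Submodule ℝ (Fin n → ℝ) where
  carrier := {x | ∀ t : ℝ, t • x ∈ H}
  zero_mem' := fun t => by simpa using H.zero_mem
  add_mem' := fun {x y} hx hy t => by rw [smul_add]; exact H.add_mem (hx t) (hy t)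
  smul_mem' := fun c x hx t => by rw [smul_smul]; exact hx (t * c)

lemma Vpart_le (H : AddSubgroup (Fin n → ℝ)) {x : Fin n → ℝ} (hx : x ∈ Vpart H) : x ∈ H := by
  simpa using hx 1

lemma exists_eps (H : AddSubgroup (Fin n → ℝ)) (hc : IsClosed (H : Set (Fin n → ℝ)))
    (W : Submodule ℝ (Fin n → ℝ)) (hVW : Vpart H ⊓ W = ⊥) :
    ∃ ε > (0:ℝ), ∀ x, x ∈ H → x ∈ W → ‖x‖ < ε → x = 0 := by
  by_contra hcon
  push_neg at hcon
  choose f hfH hfW hflt hfne using fun k : ℕ => hcon (1/(k+1)) (by positivity)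
  have hfpos : ∀ k, (0:ℝ) < ‖f k‖ := fun k => norm_pos_iff.mpr (hfne k)
  set u : ℕ → (Fin n → ℝ) := fun k => ‖f k‖⁻¹ • f k with hu_def
  have hu_mem : ∀ k, u k ∈ Metric.sphere (0 : Fin n → ℝ) 1 := by
    intro k
    simp only [mem_sphere_iff_norm, sub_zero, hu_def, norm_smul, norm_inv, norm_norm]
    field_simp
    exact div_self (hfpos k).ne'
  obtain ⟨v, hv_mem, φ, hφ, hvlim⟩ :=
    (isCompact_sphere (0 : Fin n → ℝ) 1).tendsto_subseq hu_mem
  -- the norms along the subsequence tend to 0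
  have hnorm0 : Filter.Tendsto (fun k => ‖f (φ k)‖) Filter.atTop (nhds 0) := by
    refine squeeze_zero (f := fun k => ‖f (φ k)‖) (g := fun k : ℕ => 1/(k+1)) (fun k => (hfpos _).le) ?_ ?_
    · intro k
      refine le_trans (hflt _).le (one_div_le_one_div_of_le (by positivity) ?_)
      have : k ≤ φ k := hφ.le_apply
      linarith [(Nat.cast_le (α := ℝ)).mpr this]
    · exact tendsto_one_div_add_atTop_nhds_zero_nat
  -- v is in W
  have hvW : v ∈ W := by
    refine (Submodule.closed_of_finiteDimensional W).mem_of_tendsto hvlim ?_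
    exact Filter.Eventually.of_forall fun k => W.smul_mem _ (hfW _)
  -- v is in Vpart H
  have hvV : v ∈ Vpart H := by
    intro t
    have key : Filter.Tendsto
        (fun k => (⌊t / ‖f (φ k)‖⌋ : ℤ) • f (φ k)) Filter.atTop (nhds (t • v)) := by
      have heq : ∀ k, (⌊t / ‖f (φ k)‖⌋ : ℤ) • f (φ k)
          = ((⌊t / ‖f (φ k)‖⌋ : ℝ) * ‖f (φ k)‖) • u (φ k) := by
        intro k
        rw [hu_def]
        rw [smul_smul, mul_assoc, mul_inv_cancel₀ (hfpos _).ne', mul_one, Int.cast_smul_eq_zsmul]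
      simp_rw [heq]
      refine Filter.Tendsto.smul ?_ hvlim
      -- a k → t
      have : Filter.Tendsto
          (fun k => (⌊t / ‖f (φ k)‖⌋ : ℝ) * ‖f (φ k)‖ - t) Filter.atTop (nhds 0) := by
        refine squeeze_zero_norm (a := fun k => ‖f (φ k)‖) ?_ hnorm0
        intro k
        have h1 : (⌊t / ‖f (φ k)‖⌋ : ℝ) ≤ t / ‖f (φ k)‖ := Int.floor_le _
        have h2 : t / ‖f (φ k)‖ - 1 < (⌊t / ‖f (φ k)‖⌋ : ℝ) := Int.sub_one_lt_floor _
        rw [Real.norm_eq_abs, abs_le]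
        constructor
        · nlinarith [hfpos (φ k), (div_mul_cancel₀ t (hfpos (φ k)).ne' : t / ‖f (φ k)‖ * ‖f (φ k)‖ = t)]
        · nlinarith [hfpos (φ k), (div_mul_cancel₀ t (hfpos (φ k)).ne' : t / ‖f (φ k)‖ * ‖f (φ k)‖ = t)]
      have := this.add_const t
      simpa using this
    refine hc.mem_of_tendsto key ?_
    exact Filter.Eventually.of_forall fun k => AddSubgroup.zsmul_mem H (hfH _) _
  have : v = 0 := by
    have : v ∈ Vpart H ⊓ W := ⟨hvV, hvW⟩
    rwa [hVW, Submodule.mem_bot] at this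
  rw [mem_sphere_iff_norm, sub_zero, this] at hv_mem
  simp at hv_mem

theorem closed_subgroup_of_Rn (n : ℕ) (H : AddSubgroup (Fin n → ℝ))
    (hc : IsClosed (H : Set (Fin n → ℝ))) :
    ∃ l m : ℕ, l + m ≤ n ∧
      ∃ e : H ≃+ ((Fin l → ℝ) × (Fin m → ℤ)),
        Continuous e ∧ Continuous e.symm := by
  classical
  obtain ⟨W, hW⟩ := Submodule.exists_isCompl (Vpart H)
  obtain ⟨ε, hε, hkey⟩ := exists_eps H hc W (disjoint_iff.mp hW.disjoint)
  set L : Submodule ℤ (Fin n → ℝ) :=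
    (AddSubgroup.toIntSubmodule H) ⊓ (W.restrictScalars ℤ) with hLdef
  have hLmem : ∀ x : Fin n → ℝ, x ∈ L ↔ x ∈ H ∧ x ∈ W := by
    intro x; rw [hLdef, Submodule.mem_inf, Submodule.restrictScalars_mem]
    exact and_congr_left (fun _ => Iff.rfl)
  haveI hLdisc : DiscreteTopology L := by
    refine discreteTopology_iff_isOpen_singleton_zero.mpr
      ⟨Metric.ball 0 ε, Metric.isOpen_ball, ?_⟩
    ext x
    simp only [Set.mem_preimage, mem_ball_zero_iff, Set.mem_singleton_iff]
    constructor
    · intro hx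
      have hxm := (hLmem x).mp x.2
      exact Subtype.ext (hkey x hxm.1 hxm.2 hx)
    · rintro rfl; simpa using hε
  set π := Submodule.projectionOnto (Vpart H) W hW with hπdef
  have hπcont : Continuous π := LinearMap.continuous_of_finiteDimensional π
  have hmemL : ∀ h : H, (h : Fin n → ℝ) - π h ∈ L := by
    intro h
    refine (hLmem _).mpr ⟨H.sub_mem h.2 (Vpart_le H (π (h : Fin n → ℝ)).2), ?_⟩
    have hz : π ((h : Fin n → ℝ) - π h) = 0 := by
      rw [map_sub, Submodule.projectionOnto_apply_left hW, sub_self]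
    exact (Submodule.projectionOnto_apply_eq_zero_iff hW).mp hz
  let e₁ : H ≃+ (Vpart H) × L :=
  { toFun := fun h => (π h, ⟨(h : Fin n → ℝ) - π h, hmemL h⟩)
    invFun := fun p => ⟨(p.1 : Fin n → ℝ) + p.2,
      H.add_mem (Vpart_le H p.1.2) ((hLmem _).mp p.2.2).1⟩
    left_inv := fun h => by
      ext
      simp
    right_inv := fun p => by
      have hp1 : π ((p.1 : Fin n → ℝ) + p.2) = p.1 := by
        rw [map_add, Submodule.projectionOnto_apply_left hW,
          Submodule.projectionOnto_apply_of_mem_right hW ((hLmem _).mp p.2.2).2, add_zero]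
      refine Prod.ext ?_ (Subtype.ext ?_)
      · exact hp1
      · simp only
        rw [hp1]
        exact add_sub_cancel_left _ _
    map_add' := fun a b => by
      refine Prod.ext ?_ (Subtype.ext ?_)
      · simp [map_add]
      · simp only [AddSubgroup.coe_add, map_add, Submodule.coe_add, Prod.snd_add]
        abel }
  have he₁ : Continuous e₁ := by
    refine Continuous.prodMk ?_ ?_
    · exact hπcont.comp continuous_subtype_val
    · exact Continuous.subtype_mk
        (continuous_subtype_val.sub
          (continuous_subtype_val.comp (hπcont.comp continuous_subtype_val))) _
  have he₁s : Continuous e₁.symm := by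
    exact Continuous.subtype_mk
      ((continuous_subtype_val.comp continuous_fst).add
        (continuous_subtype_val.comp continuous_snd)) _
  -- real part
  let e₂ : (Vpart H) ≃ₗ[ℝ] (Fin (finrank ℝ (Vpart H)) → ℝ) := (Module.finBasis ℝ _).equivFun
  have he₂ : Continuous e₂ := by exact LinearMap.continuous_of_finiteDimensional e₂.toLinearMap
  have he₂s : Continuous e₂.symm := by
    exact LinearMap.continuous_of_finiteDimensional e₂.symm.toLinearMap
  -- lattice part
  haveI : Module.Free ℤ L := inferInstance
  haveI : Module.Finite ℤ L := inferInstance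
  let bL := Module.Free.chooseBasis ℤ L
  set m := Fintype.card (Module.Free.ChooseBasisIndex ℤ L) with hmdef
  let e₃ : L ≃ₗ[ℤ] (Fin m → ℤ) := (bL.reindex (Fintype.equivFin _)).equivFun
  have he₃ : Continuous e₃ := continuous_of_discreteTopology
  have he₃s : Continuous e₃.symm := continuous_of_discreteTopology
  -- counting
  have hmL : m = finrank ℤ L := (Module.finrank_eq_card_chooseBasisIndex ℤ L).symm
  have hcount : finrank ℝ (Vpart H) + m ≤ n := by
    set W' := Submodule.span ℝ (L : Set (Fin n → ℝ)) with hW'def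
    have hW'W : W' ≤ W := Submodule.span_le.mpr (fun x hx => ((hLmem x).mp hx).2)
    set f := W'.subtype
    set L₀ := L.comap (f.restrictScalars ℤ) with hL₀def
    have h_img : f '' L₀ = L := by
      rw [← LinearMap.coe_restrictScalars ℤ f, ← Submodule.map_coe (f.restrictScalars ℤ),
        Submodule.map_comap_eq_self]
      exact fun x hx ↦ LinearMap.mem_range.mpr ⟨⟨x, Submodule.subset_span hx⟩, rfl⟩
    haveI : DiscreteTopology L₀ := by
      refine DiscreteTopology.preimage_of_continuous_injective (L : Set (Fin n → ℝ)) ?_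
        (Submodule.injective_subtype _)
      exact LinearMap.continuous_of_finiteDimensional f
    haveI : IsZLattice ℝ L₀ := ⟨by
      rw [← (Submodule.map_injective_of_injective
        (Submodule.injective_subtype W')).eq_iff, Submodule.map_span,
        Submodule.map_top, Submodule.range_subtype, h_img]⟩
    have hrank : finrank ℤ L₀ = finrank ℝ W' := ZLattice.rank ℝ L₀
    have hequiv : L₀ ≃ₗ[ℤ] L := by
      have : (L₀.map (f.restrictScalars ℤ)) = L := SetLike.ext'_iff.mpr h_img
      exact (Submodule.equivMapOfInjective (f.restrictScalars ℤ)
        (Submodule.injective_subtype _) L₀).trans (LinearEquiv.ofEq _ _ this)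
    have h1 : finrank ℤ L = finrank ℝ W' := by
      rw [← hrank]; exact (LinearEquiv.finrank_eq hequiv).symm
    have h2 : finrank ℝ W' ≤ finrank ℝ W := Submodule.finrank_mono hW'W
    have h3 : finrank ℝ (Vpart H) + finrank ℝ W = n := by
      rw [Submodule.finrank_add_eq_of_isCompl hW, Module.finrank_fin_fun]
    rw [hmL, h1]
    omega
  refine ⟨finrank ℝ (Vpart H), m, hcount,
    e₁.trans (AddEquiv.prodCongr e₂.toAddEquiv e₃.toAddEquiv), ?_, ?_⟩
  · exact ((he₂.comp continuous_fst).prodMk (he₃.comp continuous_snd)).comp he₁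
  · exact he₁s.comp ((he₂s.comp continuous_fst).prodMk (he₃s.comp continuous_snd))
end

section
/- In a totally disconnected locally compact Hausdorff group, every neighbourhood of the identity contains a compact open subgroup (van Dantzig's theorem). -/
open Set Filter Topology Pointwise

private lemma exist_mul_closure_nhd' {G : Type*} [Group G] [TopologicalSpace G]
    [IsTopologicalGroup G] {W : Set G} (Wcpt : IsCompact W) (Wopen : IsOpen W) :
    ∃ T ∈ 𝓝 (1 : G), W * T ⊆ W := by
  apply Wcpt.induction_on (p := fun S ↦ ∃ T ∈ 𝓝 (1 : G), S * T ⊆ W)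
    ⟨Set.univ, by simp only [univ_mem, empty_mul, empty_subset, and_self]⟩
    (fun _ _ huv ⟨T, hT, mem⟩ ↦ ⟨T, hT, (mul_subset_mul_right huv).trans mem⟩)
    fun U V ⟨T₁, hT₁, mem1⟩ ⟨T₂, hT₂, mem2⟩ ↦ ⟨T₁ ∩ T₂, inter_mem hT₁ hT₂, by
      rw [union_mul]
      exact union_subset (mul_subset_mul_left inter_subset_left |>.trans mem1)
        (mul_subset_mul_left inter_subset_right |>.trans mem2)⟩
  intro x memW
  have : (x, 1) ∈ (fun p : G × G ↦ p.1 * p.2) ⁻¹' W := by simp [memW]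
  rcases isOpen_prod_iff.mp (continuous_mul.isOpen_preimage W Wopen) x 1 this with
    ⟨U, V, Uopen, Vopen, xmemU, onememV, prodsub⟩
  have h6 : U * V ⊆ W := mul_subset_iff.mpr (fun _ hx _ hy ↦ prodsub (mk_mem_prod hx hy))
  exact ⟨U ∩ W, ⟨U, Uopen.mem_nhds xmemU, W, fun _ a ↦ a, rfl⟩,
    V, IsOpen.mem_nhds Vopen onememV, fun _ a ↦ h6 ((mul_subset_mul_right inter_subset_left) a)⟩

theorem van_Dantzig {L : Type*} [Group L] [TopologicalSpace L] [IsTopologicalGroup L]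
    [LocallyCompactSpace L] [T2Space L] [TotallyDisconnectedSpace L]
    (U : Set L) (hU : U ∈ nhds (1 : L)) :
    ∃ K : Subgroup L, IsCompact (K : Set L) ∧ IsOpen (K : Set L) ∧ (K : Set L) ⊆ U := by
  -- get a compact set C with 1 ∈ interior C ⊆ C ⊆ U
  obtain ⟨C, hC_nhds, hC_sub, hC_cpt⟩ := local_compact_nhds hU
  -- clopen basis
  obtain ⟨W, ⟨hWclopen, hW1⟩, hW_sub⟩ :=
    (loc_compact_Haus_tot_disc_of_zero_dim.nhds_hasBasis.mem_iff.mp hC_nhds)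
  have Wcpt : IsCompact W := hC_cpt.of_isClosed_subset hWclopen.1 hW_sub
  have Wopen : IsOpen W := hWclopen.2
  have WsubU : W ⊆ U := hW_sub.trans hC_sub
  -- get T with W * T ⊆ W
  obtain ⟨S, Smemnhds, mulclose⟩ := exist_mul_closure_nhd' Wcpt Wopen
  rcases mem_nhds_iff.mp Smemnhds with ⟨T, TsubS, Topen, onememT⟩
  set V : Set L := T ∩ T⁻¹ with hVdef
  have hVnhds : V ∈ 𝓝 (1 : L) := by
    simp [hVdef, Topen.mem_nhds onememT, inv_mem_nhds_one]
  have hVinv : V⁻¹ = V := by simp [hVdef, inter_comm]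
  have hVopen : IsOpen V := Topen.inter Topen.inv
  have hVmul : W * V ⊆ W := fun a ha ↦
    mulclose (mul_subset_mul_left TsubS (mul_subset_mul_left inter_subset_left ha))
  -- build subgroup
  let K : Subgroup L := {
    carrier := ⋃ n, V ^ (n + 1)
    mul_mem' := fun ha hb ↦ by
      rcases mem_iUnion.mp ha with ⟨k, hk⟩
      rcases mem_iUnion.mp hb with ⟨l, hl⟩
      apply mem_iUnion.mpr
      use k + 1 + l
      rw [add_assoc, pow_add]
      exact Set.mul_mem_mul hk hl
    one_mem' := by
      apply mem_iUnion.mpr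
      use 0
      simp [mem_of_mem_nhds hVnhds]
    inv_mem' := fun ha ↦ by
      rcases mem_iUnion.mp ha with ⟨k, hk⟩
      apply mem_iUnion.mpr
      use k
      rw [← hVinv]
      simpa only [inv_pow, Set.mem_inv, inv_inv] using hk }
  have Kopen : IsOpen (K : Set L) := by
    refine isOpen_iUnion (fun n ↦ ?_)
    rw [pow_succ]
    exact hVopen.mul_left
  have mulVpow (n : ℕ) : W * V ^ (n + 1) ⊆ W := by
    induction' n with n ih
    · simp [hVmul]
    · rw [pow_succ, ← mul_assoc]
      exact (Set.mul_subset_mul_right ih).trans hVmul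
  have hsub (n : ℕ) : V ^ (n + 1) ⊆ W * V ^ (n + 1) := fun x xin ↦ by
    rw [Set.mem_mul]
    exact ⟨1, hW1, x, xin, one_mul x⟩
  have KsubW : (K : Set L) ⊆ W := iUnion_subset fun i a ha ↦ mulVpow i (hsub i ha)
  have Kclosed : IsClosed (K : Set L) := K.isClosed_of_isOpen Kopen
  exact ⟨K, Wcpt.of_isClosed_subset Kclosed KsubW, Kopen, KsubW.trans WsubU⟩
end
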